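/- arXiv:2106.03742 — 3 statements merged into one kernel-verified Lean document; each statement's English description precedes it below -/
import Mathlib

section
/- Let α and β be standard Borel measurable spaces, let ρ and σ be probability measures on α, let η be a Markov kernel from α to β (the true conditional distribution of the missing coordinates given the observed ones), and let κ be any Markov kernel from α to β (an imputation's conditional distribution). Then klDiv(ρ ⊗ₘ η, σ ⊗ₘ η) ≤ klDiv(ρ ⊗ₘ κ, σ ⊗ₘ η). (Pattern-level version of Proposition 4.1: among all imputation distributions with the correct distribution of the observed part, imputing from the true conditional distribution minimizes the Kullback–Leibler divergence to the distribution of fully observed cases; hence the density ratio I-Score is a proper imputation score.) -/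
open MeasureTheory ProbabilityTheory Real
open scoped ENNReal NNReal ProbabilityTheory Classical

/-- Kullback–Leibler divergence of `μ` with respect to `ν`: `∫ log (dμ/dν) dμ` if `μ ≪ ν` and
the log-likelihood ratio is integrable, and `∞` otherwise. -/
noncomputable def klDiv {α : Type*} [MeasurableSpace α] (μ ν : Measure α) : ℝ≥0∞ :=
  if μ ≪ ν ∧ Integrable (llr μ ν) μ then ENNReal.ofReal (∫ x, llr μ ν x ∂μ) else ∞

section Aux

variable {α β : Type*} [MeasurableSpace α] [MeasurableSpace β]

/-- A composition-product with a fixed kernel is a density times the composition-product of the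
dominating measure with the same kernel. -/
lemma compProd_eq_withDensity_aux {ρ σ : Measure α} [IsFiniteMeasure ρ] [SigmaFinite σ]
    (hρσ : ρ ≪ σ) (η : Kernel α β) [IsSFiniteKernel η] :
    ρ ⊗ₘ η = (σ ⊗ₘ η).withDensity (fun p ↦ ρ.rnDeriv σ p.1) := by
  have hm : Measurable fun p : α × β ↦ ρ.rnDeriv σ p.1 :=
    (Measure.measurable_rnDeriv ρ σ).comp measurable_fst
  ext s hs
  rw [withDensity_apply _ hs, ← lintegral_indicator hs _,
    Measure.lintegral_compProd (hm.indicator hs), Measure.compProd_apply hs]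
  have h1 : ∀ x, ∫⁻ y, s.indicator (fun p : α × β ↦ ρ.rnDeriv σ p.1) (x, y) ∂(η x)
      = ρ.rnDeriv σ x * η x (Prod.mk x ⁻¹' s) := by
    intro x
    have h2 : ∀ y, s.indicator (fun p : α × β ↦ ρ.rnDeriv σ p.1) (x, y)
        = (Prod.mk x ⁻¹' s).indicator (fun _ ↦ ρ.rnDeriv σ x) y := by
      intro y
      by_cases hy : (x, y) ∈ s <;> simp [Set.indicator, hy]
    simp_rw [h2]
    rw [lintegral_indicator (measurable_prodMk_left hs) _, setLIntegral_const]
  simp_rw [h1]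
  exact (lintegral_rnDeriv_mul hρσ
    (Kernel.measurable_kernel_prodMk_left (κ := η) hs).aemeasurable).symm

lemma absolutelyContinuous_withDensity_aux {γ : Type*} [MeasurableSpace γ]
    {μ ν : Measure γ} {f : γ → ℝ≥0∞} (hμν : μ ≪ ν) (hf : Measurable f)
    (h0 : μ {x | f x = 0} = 0) :
    μ ≪ ν.withDensity f := by
  refine Measure.AbsolutelyContinuous.mk fun s hs h => ?_
  rw [withDensity_apply _ hs] at h
  have h2 : ∀ᵐ x ∂ν, x ∈ s → f x = 0 := (setLIntegral_eq_zero_iff hs hf).1 h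
  have h3 : ν {x | ¬ (x ∈ s → f x = 0)} = 0 := h2
  have hsub : s ⊆ {x | ¬ (x ∈ s → f x = 0)} ∪ {x | f x = 0} := by
    intro x hx
    by_cases hfx : f x = 0
    · exact Or.inr hfx
    · exact Or.inl (fun h' => hfx (h' hx))
  refine le_antisymm ?_ zero_le
  calc μ s ≤ μ ({x | ¬ (x ∈ s → f x = 0)} ∪ {x | f x = 0}) := measure_mono hsub
    _ ≤ μ {x | ¬ (x ∈ s → f x = 0)} + μ {x | f x = 0} := measure_union_le _ _
    _ = 0 := by rw [hμν h3, h0, add_zero]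

lemma integrable_max_neg_llr {γ : Type*} [MeasurableSpace γ] {μ τ : Measure γ}
    [SigmaFinite μ] [IsFiniteMeasure τ] (hμτ : μ ≪ τ) :
    Integrable (fun x ↦ max (-llr μ τ x) 0) μ := by
  have hexp : Integrable (fun x ↦ exp (-llr μ τ x)) μ :=
    Measure.integrable_toReal_rnDeriv.congr (exp_neg_llr hμτ).symm
  refine hexp.mono' ((measurable_llr μ τ).neg.max measurable_const).aestronglyMeasurable
    (Filter.Eventually.of_forall fun x ↦ ?_)
  rw [Real.norm_eq_abs, abs_of_nonneg (le_max_right _ _)]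
  exact max_le (by linarith [Real.add_one_le_exp (-llr μ τ x)]) (Real.exp_pos _).le

lemma integral_llr_nonneg_aux {γ : Type*} [MeasurableSpace γ] {μ τ : Measure γ}
    [IsProbabilityMeasure μ] [IsProbabilityMeasure τ]
    (hμτ : μ ≪ τ) (h : Integrable (llr μ τ) μ) : 0 ≤ ∫ x, llr μ τ x ∂μ := by
  have hexp : Integrable (fun x ↦ exp (-llr μ τ x)) μ :=
    Measure.integrable_toReal_rnDeriv.congr (exp_neg_llr hμτ).symm
  have hle : ∫ x, -llr μ τ x ∂μ ≤ ∫ x, (exp (-llr μ τ x) - 1) ∂μ :=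
    integral_mono h.neg (hexp.sub (integrable_const 1)) fun x ↦ by
      have := Real.add_one_le_exp (-llr μ τ x); simp only; linarith
  have h2 : ∫ x, (exp (-llr μ τ x) - 1) ∂μ = ∫ x, exp (-llr μ τ x) ∂μ - 1 := by
    rw [integral_sub hexp (integrable_const 1), integral_const]; simp
  have h3 : ∫ x, exp (-llr μ τ x) ∂μ = ∫ x, (τ.rnDeriv μ x).toReal ∂μ :=
    integral_congr_ae (exp_neg_llr hμτ)
  have h4 : ∫ x, (τ.rnDeriv μ x).toReal ∂μ ≤ (τ Set.univ).toReal := by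
    rw [← setIntegral_univ]
    exact Measure.setIntegral_toReal_rnDeriv_le (measure_ne_top τ _)
  rw [integral_neg] at hle
  have h5 : (τ Set.univ).toReal = 1 := by simp
  linarith

end Aux

private lemma add_max_neg_aux (t : ℝ) : t + max (-t) 0 = max t 0 := by
  rcases le_total t 0 with h | h
  · rw [max_eq_left (neg_nonneg.mpr h), max_eq_right h]; ring
  · rw [max_eq_right (neg_nonpos.mpr h), max_eq_left h]; ring


theorem klDiv_compProd_true_kernel_le {α β : Type*}
    [MeasurableSpace α] [StandardBorelSpace α] [MeasurableSpace β] [StandardBorelSpace β]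
    (ρ σ : Measure α) [IsProbabilityMeasure ρ] [IsProbabilityMeasure σ]
    (η κ : Kernel α β) [IsMarkovKernel η] [IsMarkovKernel κ] :
    klDiv (ρ ⊗ₘ η) (σ ⊗ₘ η) ≤ klDiv (ρ ⊗ₘ κ) (σ ⊗ₘ η) := by
  set μ : Measure (α × β) := ρ ⊗ₘ κ with hμ_def
  set ν : Measure (α × β) := σ ⊗ₘ η with hν_def
  have hμP : IsProbabilityMeasure μ := by rw [hμ_def]; infer_instance
  have hνP : IsProbabilityMeasure ν := by rw [hν_def]; infer_instance
  have hαne : Nonempty α := by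
    by_contra h
    have h' : IsEmpty α := not_nonempty_iff.mp h
    have h2 := measure_univ (μ := ρ)
    rw [Set.univ_eq_empty_iff.mpr h', measure_empty] at h2
    exact zero_ne_one h2
  have hβne : Nonempty β := by
    by_contra h
    have h' : IsEmpty β := not_nonempty_iff.mp h
    obtain ⟨x⟩ := hαne
    have h2 := measure_univ (μ := κ x)
    rw [Set.univ_eq_empty_iff.mpr h', measure_empty] at h2
    exact zero_ne_one h2
  by_cases hc : μ ≪ ν ∧ Integrable (llr μ ν) μ
  swap
  · rw [klDiv, klDiv, if_neg hc]; exact le_top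
  obtain ⟨hμν, hint⟩ := hc
  -- marginals
  have hfstμ : μ.map Prod.fst = ρ := by
    rw [show μ.map Prod.fst = μ.fst from rfl, hμ_def, Measure.fst_compProd]
  have hfstν : ν.map Prod.fst = σ := by
    rw [show ν.map Prod.fst = ν.fst from rfl, hν_def, Measure.fst_compProd]
  have hρσ : ρ ≪ σ := by
    have h := hμν.map (f := Prod.fst) measurable_fst
    rwa [hfstμ, hfstν] at h
  -- transfer along fst for μ
  have hlift : ∀ {P : α → Prop}, (∀ᵐ x ∂ρ, P x) → ∀ᵐ p ∂μ, P p.1 := by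
    intro P hP
    exact ae_of_ae_map measurable_fst.aemeasurable (hfstμ ▸ hP)
  have hIntFst : ∀ (f : α → ℝ), Measurable f →
      (Integrable (fun p : α × β ↦ f p.1) μ ↔ Integrable f ρ) := by
    intro f hf
    rw [← hfstμ]
    exact (integrable_map_measure hf.aestronglyMeasurable
      measurable_fst.aemeasurable).symm
  -- the density of ρ wrt σ, lifted to the product
  set D : α × β → ℝ≥0∞ := fun p ↦ ρ.rnDeriv σ p.1 with hD_def
  have hDmeas : Measurable D := (Measure.measurable_rnDeriv ρ σ).comp measurable_fst
  -- τ : ρ composed with the conditional kernel of ν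
  have hνfst : ν.fst = σ := Measure.fst_compProd σ η
  have hνdis : σ ⊗ₘ ν.condKernel = ν := by
    have h := ν.disintegrate ν.condKernel
    rw [hνfst] at h
    exact h
  set τ : Measure (α × β) := ρ ⊗ₘ ν.condKernel with hτ_def
  have hτP : IsProbabilityMeasure τ := by rw [hτ_def]; infer_instance
  have hτ : τ = ν.withDensity D := by
    rw [hτ_def, compProd_eq_withDensity_aux hρσ ν.condKernel, hνdis]
  have hμτ : μ ≪ τ := by
    rw [hτ]
    refine absolutelyContinuous_withDensity_aux hμν hDmeas ?_
    have h0 : ∀ᵐ p ∂μ, ¬ D p = 0 := by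
      simp only [hD_def]
      exact hlift (by filter_upwards [Measure.rnDeriv_pos hρσ] with x hx using hx.ne')
    rw [ae_iff] at h0
    simpa using h0
  -- rnDeriv identities
  have hτrn : τ.rnDeriv ν =ᵐ[ν] D := by
    rw [hτ]; exact Measure.rnDeriv_withDensity ν hDmeas
  have hchain : ∀ᵐ p ∂μ, μ.rnDeriv τ p * τ.rnDeriv ν p = μ.rnDeriv ν p :=
    hμν.ae_le (Measure.rnDeriv_mul_rnDeriv hμτ)
  have hpos1 : ∀ᵐ p ∂μ, 0 < μ.rnDeriv τ p := Measure.rnDeriv_pos hμτ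
  have hfin1 : ∀ᵐ p ∂μ, μ.rnDeriv τ p < ∞ := hμτ.ae_le (Measure.rnDeriv_lt_top μ τ)
  have hpos2 : ∀ᵐ p ∂μ, 0 < D p := hlift (Measure.rnDeriv_pos hρσ)
  have hfin2 : ∀ᵐ p ∂μ, D p < ∞ := hlift (hρσ.ae_le (Measure.rnDeriv_lt_top ρ σ))
  set G : α × β → ℝ := llr μ τ with hG_def
  set H : α × β → ℝ := fun p ↦ llr ρ σ p.1 with hH_def
  have hHmeas : Measurable H := (measurable_llr ρ σ).comp measurable_fst
  have hsum : llr μ ν =ᵐ[μ] fun p ↦ G p + H p := by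
    filter_upwards [hchain, hμν.ae_le hτrn, hpos1, hfin1, hpos2, hfin2]
      with p h1 h2 h3 h4 h5 h6
    have ha : (μ.rnDeriv τ p).toReal ≠ 0 := ENNReal.toReal_ne_zero.mpr ⟨h3.ne', h4.ne⟩
    have hb : (D p).toReal ≠ 0 := ENNReal.toReal_ne_zero.mpr ⟨h5.ne', h6.ne⟩
    rw [llr, ← h1, h2, ENNReal.toReal_mul, Real.log_mul ha hb]
    rfl
  -- integrability of negative parts
  have hnegG : Integrable (fun p ↦ max (-G p) 0) μ := integrable_max_neg_llr hμτ
  have hnegρ : Integrable (fun x ↦ max (-llr ρ σ x) 0) ρ := integrable_max_neg_llr hρσ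
  have hnegH : Integrable (fun p ↦ max (-H p) 0) μ :=
    (hIntFst _ ((measurable_llr ρ σ).neg.max measurable_const)).2 hnegρ
  have hbound : Integrable (fun p ↦ llr μ ν p + max (-G p) 0 + max (-H p) 0) μ :=
    (hint.add hnegG).add hnegH
  have haeG : ∀ᵐ p ∂μ, ‖max (G p) 0‖ ≤ llr μ ν p + max (-G p) 0 + max (-H p) 0 := by
    filter_upwards [hsum] with p hp
    rw [Real.norm_eq_abs, abs_of_nonneg (le_max_right _ _), hp]
    linarith [add_max_neg_aux (G p), add_max_neg_aux (H p), le_max_right (H p) 0]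
  have haeH : ∀ᵐ p ∂μ, ‖max (H p) 0‖ ≤ llr μ ν p + max (-G p) 0 + max (-H p) 0 := by
    filter_upwards [hsum] with p hp
    rw [Real.norm_eq_abs, abs_of_nonneg (le_max_right _ _), hp]
    linarith [add_max_neg_aux (G p), add_max_neg_aux (H p), le_max_right (G p) 0]
  have hGpos : Integrable (fun p ↦ max (G p) 0) μ :=
    hbound.mono' (((measurable_llr μ τ).max measurable_const).aestronglyMeasurable) haeG
  have hHpos : Integrable (fun p ↦ max (H p) 0) μ :=
    hbound.mono' ((hHmeas.max measurable_const).aestronglyMeasurable) haeH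
  have hG : Integrable G μ :=
    (hGpos.sub hnegG).congr (Filter.Eventually.of_forall fun p ↦ by
      show max (G p) 0 - max (-G p) 0 = G p
      linarith [add_max_neg_aux (G p)])
  have hH : Integrable H μ :=
    (hHpos.sub hnegH).congr (Filter.Eventually.of_forall fun p ↦ by
      show max (H p) 0 - max (-H p) 0 = H p
      linarith [add_max_neg_aux (H p)])
  have hllrρσ : Integrable (llr ρ σ) ρ := (hIntFst _ (measurable_llr ρ σ)).1 hH
  -- integral identities and inequalities
  have hIntEq : ∫ p, llr μ ν p ∂μ = ∫ p, G p ∂μ + ∫ p, H p ∂μ := by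
    rw [integral_congr_ae hsum]; exact integral_add hG hH
  have hGnonneg : 0 ≤ ∫ p, G p ∂μ := integral_llr_nonneg_aux hμτ hG
  have hHeq : ∫ p, H p ∂μ = ∫ x, llr ρ σ x ∂ρ := by
    have key := integral_map (φ := Prod.fst) (μ := μ) measurable_fst.aemeasurable
      (f := llr ρ σ) (stronglyMeasurable_llr ρ σ).aestronglyMeasurable
    rw [hfstμ] at key
    exact key.symm
  -- the left-hand side
  set ξ : Measure (α × β) := ρ ⊗ₘ η with hξ_def
  have hξP : IsProbabilityMeasure ξ := by rw [hξ_def]; infer_instance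
  have hξden : ξ = ν.withDensity D := by
    rw [hξ_def, hν_def]; exact compProd_eq_withDensity_aux hρσ η
  have hξac : ξ ≪ ν := by
    rw [hξden]; exact withDensity_absolutelyContinuous ν D
  have hξrn : ξ.rnDeriv ν =ᵐ[ν] D := by
    rw [hξden]; exact Measure.rnDeriv_withDensity ν hDmeas
  have hξllr : llr ξ ν =ᵐ[ξ] H := by
    filter_upwards [hξac.ae_le hξrn] with p hp
    rw [llr, hp]
    simp only [hD_def, hH_def]
    rfl
  have hfstξ : ξ.map Prod.fst = ρ := by
    rw [show ξ.map Prod.fst = ξ.fst from rfl, hξ_def, Measure.fst_compProd]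
  have hξH : Integrable H ξ := by
    have h1 : Integrable (llr ρ σ) (ξ.map Prod.fst) := by rw [hfstξ]; exact hllrρσ
    exact (integrable_map_measure (stronglyMeasurable_llr ρ σ).aestronglyMeasurable
      measurable_fst.aemeasurable).1 h1
  have hξint : Integrable (llr ξ ν) ξ := hξH.congr hξllr.symm
  have hξval : ∫ p, llr ξ ν p ∂ξ = ∫ x, llr ρ σ x ∂ρ := by
    rw [integral_congr_ae hξllr]
    have key := integral_map (φ := Prod.fst) (μ := ξ) measurable_fst.aemeasurable
      (f := llr ρ σ) (stronglyMeasurable_llr ρ σ).aestronglyMeasurable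
    rw [hfstξ] at key
    exact key.symm
  -- conclusion
  rw [klDiv, klDiv, if_pos ⟨hξac, hξint⟩, if_pos ⟨hμν, hint⟩]
  refine ENNReal.ofReal_le_ofReal ?_
  rw [hξval, hIntEq]
  linarith [hGnonneg, hHeq.ge, hHeq.le]
end

section
/- Let α and β be standard Borel measurable spaces, let ρ and σ be probability measures on α, let η and κ be Markov kernels from α to β, and assume klDiv(ρ ⊗ₘ κ, σ ⊗ₘ η) < ∞. If it is not the case that κ x = η x for ρ-almost every x, then klDiv(ρ ⊗ₘ η, σ ⊗ₘ η) < klDiv(ρ ⊗ₘ κ, σ ⊗ₘ η), with strict inequality. (Strict propriety in Proposition 4.1: any imputation whose conditional distribution differs from the true one on a set of positive probability of observed values is scored strictly worse than the true-data imputation by the DR I-Score.) -/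
open MeasureTheory ProbabilityTheory Real
open scoped ENNReal NNReal ProbabilityTheory Classical

section Aux

variable {α β : Type*} [MeasurableSpace α] [MeasurableSpace β]

/-- `t log t - t + 1 ≥ 0` for `t ≥ 0`. -/
lemma klAux_mul_log_nonneg {t : ℝ} (ht : 0 ≤ t) : 0 ≤ t * Real.log t - t + 1 := by
  rcases eq_or_lt_of_le ht with h | h
  · simp [← h]
  · have h1 : Real.log t⁻¹ ≤ t⁻¹ - 1 := Real.log_le_sub_one_of_pos (inv_pos.2 h)
    rw [Real.log_inv] at h1
    have h2 := mul_le_mul_of_nonneg_left h1 ht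
    have h3 : t * t⁻¹ = 1 := mul_inv_cancel₀ h.ne'
    nlinarith

/-- equality case. -/
lemma klAux_eq_one_of {t : ℝ} (ht : 0 ≤ t) (h : t * Real.log t - t + 1 = 0) : t = 1 := by
  rcases eq_or_lt_of_le ht with h0 | h0
  · exfalso; rw [← h0] at h; norm_num at h
  · by_contra hne
    have h1 : Real.log t⁻¹ < t⁻¹ - 1 :=
      Real.log_lt_sub_one_of_pos (inv_pos.2 h0) (by
        intro hh; exact hne (by rw [← inv_inv t, hh, inv_one]))
    rw [Real.log_inv] at h1
    have h2 := mul_lt_mul_of_pos_left h1 h0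
    have h3 : t * t⁻¹ = 1 := mul_inv_cancel₀ h0.ne'
    nlinarith

lemma klAux_integral_llr_nonneg (μ ν : Measure α) [IsProbabilityMeasure μ]
    [IsProbabilityMeasure ν] (hμν : μ ≪ ν) (h_int : Integrable (llr μ ν) μ) :
    0 ≤ ∫ x, llr μ ν x ∂μ := by
  have hg_int : Integrable (fun x ↦ (μ.rnDeriv ν x).toReal) ν :=
    Measure.integrable_toReal_rnDeriv
  have hgl_int : Integrable (fun x ↦ (μ.rnDeriv ν x).toReal * llr μ ν x) ν := by
    simpa [smul_eq_mul] using (integrable_rnDeriv_smul_iff hμν).mpr h_int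
  have h_eq : ∫ x, llr μ ν x ∂μ = ∫ x, (μ.rnDeriv ν x).toReal * llr μ ν x ∂ν := by
    rw [← integral_rnDeriv_smul hμν]; simp [smul_eq_mul]
  have hsub : Integrable
      (fun x ↦ (μ.rnDeriv ν x).toReal * llr μ ν x - (μ.rnDeriv ν x).toReal) ν :=
    hgl_int.sub hg_int
  have hψ_int : Integrable
      (fun x ↦ (μ.rnDeriv ν x).toReal * llr μ ν x - (μ.rnDeriv ν x).toReal + 1) ν :=
    hsub.add (integrable_const 1)
  have hψ_nonneg : 0 ≤ᵐ[ν]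
      fun x ↦ (μ.rnDeriv ν x).toReal * llr μ ν x - (μ.rnDeriv ν x).toReal + 1 :=
    Filter.Eventually.of_forall fun x ↦ klAux_mul_log_nonneg ENNReal.toReal_nonneg
  have hgint : ∫ x, (μ.rnDeriv ν x).toReal ∂ν = 1 := by
    rw [Measure.integral_toReal_rnDeriv hμν]; simp
  have h2 : ∫ x, ((μ.rnDeriv ν x).toReal * llr μ ν x - (μ.rnDeriv ν x).toReal + 1) ∂ν
      = ∫ x, llr μ ν x ∂μ := by
    rw [integral_add hsub (integrable_const 1),
      integral_sub hgl_int hg_int, hgint, h_eq]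
    simp
  rw [← h2]
  exact integral_nonneg_of_ae hψ_nonneg

lemma klAux_integral_llr_pos (μ ν : Measure α) [IsProbabilityMeasure μ]
    [IsProbabilityMeasure ν] (hμν : μ ≪ ν) (h_int : Integrable (llr μ ν) μ)
    (hne : μ ≠ ν) :
    0 < ∫ x, llr μ ν x ∂μ := by
  rcases (klAux_integral_llr_nonneg μ ν hμν h_int).lt_or_eq with h | h
  · exact h
  exfalso
  -- repeat the set-up from the nonneg proof
  have hg_int : Integrable (fun x ↦ (μ.rnDeriv ν x).toReal) ν :=
    Measure.integrable_toReal_rnDeriv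
  have hgl_int : Integrable (fun x ↦ (μ.rnDeriv ν x).toReal * llr μ ν x) ν := by
    simpa [smul_eq_mul] using (integrable_rnDeriv_smul_iff hμν).mpr h_int
  have h_eq : ∫ x, llr μ ν x ∂μ = ∫ x, (μ.rnDeriv ν x).toReal * llr μ ν x ∂ν := by
    rw [← integral_rnDeriv_smul hμν]; simp [smul_eq_mul]
  have hsub : Integrable
      (fun x ↦ (μ.rnDeriv ν x).toReal * llr μ ν x - (μ.rnDeriv ν x).toReal) ν :=
    hgl_int.sub hg_int
  have hψ_int : Integrable
      (fun x ↦ (μ.rnDeriv ν x).toReal * llr μ ν x - (μ.rnDeriv ν x).toReal + 1) ν :=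
    hsub.add (integrable_const 1)
  have hψ_nonneg : 0 ≤ᵐ[ν]
      fun x ↦ (μ.rnDeriv ν x).toReal * llr μ ν x - (μ.rnDeriv ν x).toReal + 1 :=
    Filter.Eventually.of_forall fun x ↦ klAux_mul_log_nonneg ENNReal.toReal_nonneg
  have hgint : ∫ x, (μ.rnDeriv ν x).toReal ∂ν = 1 := by
    rw [Measure.integral_toReal_rnDeriv hμν]; simp
  have h2 : ∫ x, ((μ.rnDeriv ν x).toReal * llr μ ν x - (μ.rnDeriv ν x).toReal + 1) ∂ν
      = ∫ x, llr μ ν x ∂μ := by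
    rw [integral_add hsub (integrable_const 1),
      integral_sub hgl_int hg_int, hgint, h_eq]
    simp
  have h3 : ∫ x, ((μ.rnDeriv ν x).toReal * llr μ ν x - (μ.rnDeriv ν x).toReal + 1) ∂ν = 0 := by
    rw [h2, ← h]
  have hae := (integral_eq_zero_iff_of_nonneg_ae hψ_nonneg hψ_int).mp h3
  -- the Radon-Nikodym derivative is a.e. 1
  have h_one : μ.rnDeriv ν =ᵐ[ν] 1 := by
    filter_upwards [hae, Measure.rnDeriv_lt_top μ ν] with x hx hx_top
    have hx' : (μ.rnDeriv ν x).toReal = 1 := by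
      have := klAux_eq_one_of (t := (μ.rnDeriv ν x).toReal) ENNReal.toReal_nonneg ?_
      · exact this
      · simpa [llr] using hx
    have : μ.rnDeriv ν x = ENNReal.ofReal ((μ.rnDeriv ν x).toReal) :=
      (ENNReal.ofReal_toReal hx_top.ne).symm
    rw [this, hx']
    simp
  apply hne
  calc μ = ν.withDensity (μ.rnDeriv ν) := (Measure.withDensity_rnDeriv_eq μ ν hμν).symm
  _ = ν.withDensity 1 := withDensity_congr_ae h_one
  _ = ν := by simp

/-- The negative part of the log-likelihood ratio is integrable. -/
lemma klAux_integrable_neg_llr (μ ν : Measure α) [IsProbabilityMeasure μ]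
    [IsProbabilityMeasure ν] (hμν : μ ≪ ν) :
    Integrable (fun x ↦ max (-(llr μ ν x)) 0) μ := by
  have h1 : Integrable (fun x ↦ (ν.rnDeriv μ x).toReal) μ :=
    Measure.integrable_toReal_rnDeriv
  refine h1.mono' ((measurable_llr μ ν).neg.max measurable_const).aestronglyMeasurable ?_
  filter_upwards [exp_neg_llr hμν] with x hx
  rw [Real.norm_eq_abs, abs_of_nonneg (le_max_right _ _), ← hx]
  refine max_le ?_ (Real.exp_pos _).le
  linarith [Real.add_one_le_exp (-(llr μ ν x))]

lemma klAux_abs_le {a b : ℝ} : |a| ≤ |a + b| + max (-a) 0 + max (-b) 0 := by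
  rcases le_total a 0 with h | h
  · rw [abs_of_nonpos h]
    have h1 : -a ≤ max (-a) 0 := le_max_left _ _
    have h2 : (0 : ℝ) ≤ max (-b) 0 := le_max_right _ _
    linarith [abs_nonneg (a + b)]
  · rw [abs_of_nonneg h]
    have h1 : a + b ≤ |a + b| := le_abs_self _
    have h2 : -b ≤ max (-b) 0 := le_max_left _ _
    have h3 : (0 : ℝ) ≤ max (-a) 0 := le_max_right _ _
    linarith

/-- Splitting integrability of a sum using integrability of the negative parts. -/
lemma klAux_integrable_of_add {μ : Measure α} {f g : α → ℝ}
    (hfm : AEStronglyMeasurable f μ) (hgm : AEStronglyMeasurable g μ)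
    (h_add : Integrable (fun x ↦ f x + g x) μ)
    (hf : Integrable (fun x ↦ max (-(f x)) 0) μ)
    (hg : Integrable (fun x ↦ max (-(g x)) 0) μ) :
    Integrable f μ ∧ Integrable g μ := by
  constructor
  · refine ((h_add.abs.add hf).add hg).mono' hfm ?_
    refine Filter.Eventually.of_forall fun x ↦ ?_
    rw [Real.norm_eq_abs]
    exact klAux_abs_le
  · refine ((h_add.abs.add hg).add hf).mono' hgm ?_
    refine Filter.Eventually.of_forall fun x ↦ ?_
    rw [Real.norm_eq_abs]
    calc |g x| ≤ |g x + f x| + max (-(g x)) 0 + max (-(f x)) 0 := klAux_abs_le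
    _ = |f x + g x| + max (-(g x)) 0 + max (-(f x)) 0 := by rw [add_comm (g x)]

/-- `ρ ⊗ₘ η` as a density w.r.t. `σ ⊗ₘ η`. -/
lemma klAux_compProd_withDensity (ρ σ : Measure α) [IsProbabilityMeasure ρ]
    [IsProbabilityMeasure σ] (η : Kernel α β) [IsMarkovKernel η] (hρσ : ρ ≪ σ) :
    ρ ⊗ₘ η = (σ ⊗ₘ η).withDensity (fun p ↦ ρ.rnDeriv σ p.1) := by
  have hf : Measurable (fun p : α × β ↦ ρ.rnDeriv σ p.1) :=
    (Measure.measurable_rnDeriv ρ σ).comp measurable_fst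
  ext s hs
  rw [withDensity_apply _ hs, Measure.compProd_apply hs]
  have h_inner : ∀ x, ∫⁻ y, s.indicator (fun p : α × β ↦ ρ.rnDeriv σ p.1) (x, y) ∂(η x)
      = ρ.rnDeriv σ x * η x (Prod.mk x ⁻¹' s) := by
    intro x
    have h_eq : ∀ y, s.indicator (fun p : α × β ↦ ρ.rnDeriv σ p.1) (x, y)
        = ρ.rnDeriv σ x * (Prod.mk x ⁻¹' s).indicator 1 y := by
      intro y
      by_cases h : (x, y) ∈ s <;> simp [Set.indicator, h, Set.mem_preimage]
    simp_rw [h_eq]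
    rw [lintegral_const_mul _ (measurable_one.indicator (measurable_prodMk_left hs)),
      lintegral_indicator_one (measurable_prodMk_left hs)]
  calc ∫⁻ x, η x (Prod.mk x ⁻¹' s) ∂ρ
      = ∫⁻ x, η x (Prod.mk x ⁻¹' s) ∂(σ.withDensity (ρ.rnDeriv σ)) := by
        rw [Measure.withDensity_rnDeriv_eq ρ σ hρσ]
  _ = ∫⁻ x, ρ.rnDeriv σ x * η x (Prod.mk x ⁻¹' s) ∂σ := by
        rw [lintegral_withDensity_eq_lintegral_mul _ (Measure.measurable_rnDeriv ρ σ)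
          (Kernel.measurable_kernel_prodMk_left hs)]
        rfl
  _ = ∫⁻ x, ∫⁻ y, s.indicator (fun p : α × β ↦ ρ.rnDeriv σ p.1) (x, y) ∂(η x) ∂σ := by
        simp_rw [h_inner]
  _ = ∫⁻ p, s.indicator (fun p : α × β ↦ ρ.rnDeriv σ p.1) p ∂(σ ⊗ₘ η) :=
        (Measure.lintegral_compProd (hf.indicator hs)).symm
  _ = ∫⁻ p in s, ρ.rnDeriv σ p.1 ∂(σ ⊗ₘ η) := by rw [lintegral_indicator hs]

lemma klAux_rnDeriv_compProd_left (ρ σ : Measure α) [IsProbabilityMeasure ρ]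
    [IsProbabilityMeasure σ] (η : Kernel α β) [IsMarkovKernel η] (hρσ : ρ ≪ σ) :
    (ρ ⊗ₘ η).rnDeriv (σ ⊗ₘ η) =ᵐ[σ ⊗ₘ η] fun p ↦ ρ.rnDeriv σ p.1 := by
  have hf : Measurable (fun p : α × β ↦ ρ.rnDeriv σ p.1) :=
    (Measure.measurable_rnDeriv ρ σ).comp measurable_fst
  rw [klAux_compProd_withDensity ρ σ η hρσ]
  exact Measure.rnDeriv_withDensity (σ ⊗ₘ η) hf

/-- From `ρ ⊗ₘ κ ≪ σ ⊗ₘ η` and `ρ ≪ σ`, deduce `ρ ⊗ₘ κ ≪ ρ ⊗ₘ η`. -/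
lemma klAux_absCont (ρ σ : Measure α) [IsProbabilityMeasure ρ] [IsProbabilityMeasure σ]
    (η κ : Kernel α β) [IsMarkovKernel η] [IsMarkovKernel κ]
    (hρσ : ρ ≪ σ) (hAC : ρ ⊗ₘ κ ≪ σ ⊗ₘ η) :
    ρ ⊗ₘ κ ≪ ρ ⊗ₘ η := by
  refine Measure.AbsolutelyContinuous.mk fun s hs hs0 ↦ ?_
  set f := ρ.rnDeriv σ with hf_def
  set T := {x | f x = 0} with hT_def
  have hT : MeasurableSet T := Measure.measurable_rnDeriv ρ σ (measurableSet_singleton 0)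
  have hρT : ρ T = 0 := by
    conv_lhs => rw [← Measure.withDensity_rnDeriv_eq ρ σ hρσ]
    rw [withDensity_apply _ hT]
    have : ∫⁻ x in T, f x ∂σ = ∫⁻ x in T, 0 ∂σ := by
      refine setLIntegral_congr_fun hT (fun x hx ↦ hx)
    rw [this, lintegral_zero]
  have h0 : ∀ᵐ x ∂ρ, η x (Prod.mk x ⁻¹' s) = 0 := by
    rw [Measure.compProd_apply hs] at hs0
    exact (lintegral_eq_zero_iff (Kernel.measurable_kernel_prodMk_left hs)).mp hs0
  -- transfer to σ-a.e. on Tᶜ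
  have hσ0 : ∀ᵐ x ∂σ, f x ≠ 0 → η x (Prod.mk x ⁻¹' s) = 0 := by
    set N := {x | η x (Prod.mk x ⁻¹' s) ≠ 0} with hN_def
    have hN : MeasurableSet N :=
      ((Kernel.measurable_kernel_prodMk_left hs) (measurableSet_singleton 0)).compl
    have hρN : ρ N = 0 := by
      have h0' := h0
      rw [ae_iff] at h0'
      simpa [N] using h0'
    have hσN : ∫⁻ x in N, f x ∂σ = 0 := by
      conv_rhs => rw [← hρN]
      conv_rhs => rw [← Measure.withDensity_rnDeriv_eq ρ σ hρσ, withDensity_apply _ hN]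
    have hfN0 : f =ᵐ[σ.restrict N] 0 :=
      (lintegral_eq_zero_iff (Measure.measurable_rnDeriv ρ σ)).mp hσN
    have hfN : ∀ᵐ x ∂(σ.restrict N), f x = 0 := by
      filter_upwards [hfN0] with x hx using hx
    rw [ae_restrict_iff' hN] at hfN
    filter_upwards [hfN] with x hx hfx
    by_contra hη
    exact hfx (hx hη)
  have hs' : MeasurableSet (s ∩ Tᶜ ×ˢ Set.univ) := hs.inter (hT.compl.prod MeasurableSet.univ)
  have key : (σ ⊗ₘ η) (s ∩ Tᶜ ×ˢ Set.univ) = 0 := by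
    rw [Measure.compProd_apply hs']
    rw [lintegral_eq_zero_iff (Kernel.measurable_kernel_prodMk_left hs')]
    filter_upwards [hσ0] with x hx
    by_cases hfx : f x = 0
    · have : Prod.mk x ⁻¹' (s ∩ Tᶜ ×ˢ Set.univ) = ∅ := by
        ext y; simp [T, hfx]
      simp [this]
    · have : Prod.mk x ⁻¹' (s ∩ Tᶜ ×ˢ Set.univ) = Prod.mk x ⁻¹' s := by
        ext y; simp [T, hfx]
      rw [this]
      exact hx hfx
  have h1 : (ρ ⊗ₘ κ) (s ∩ Tᶜ ×ˢ Set.univ) = 0 := hAC key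
  have h2 : (ρ ⊗ₘ κ) (T ×ˢ Set.univ) = 0 := by
    rw [Measure.compProd_apply_prod hT MeasurableSet.univ]
    have : ∫⁻ x in T, κ x Set.univ ∂ρ = ∫⁻ x in T, 1 ∂ρ := by
      refine setLIntegral_congr_fun hT (fun x _ ↦ ?_)
      simp
    rw [this, setLIntegral_one, hρT]
  have hsub : s ⊆ (s ∩ Tᶜ ×ˢ Set.univ) ∪ T ×ˢ Set.univ := by
    rintro ⟨x, y⟩ hxy
    by_cases hx : x ∈ T
    · exact Or.inr (by simp [hx])
    · exact Or.inl ⟨hxy, by simp [T, Set.mem_setOf_eq] at hx ⊢; exact hx⟩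
  refine le_antisymm ?_ zero_le
  calc (ρ ⊗ₘ κ) s ≤ (ρ ⊗ₘ κ) ((s ∩ Tᶜ ×ˢ Set.univ) ∪ T ×ˢ Set.univ) := measure_mono hsub
  _ ≤ (ρ ⊗ₘ κ) (s ∩ Tᶜ ×ˢ Set.univ) + (ρ ⊗ₘ κ) (T ×ˢ Set.univ) := measure_union_le _ _
  _ = 0 := by rw [h1, h2, add_zero]

/-- Chain rule for the log-likelihood ratio. -/
lemma klAux_llr_chain (μ ν ξ : Measure α) [IsProbabilityMeasure μ] [IsProbabilityMeasure ν]
    [IsProbabilityMeasure ξ] (hμν : μ ≪ ν) (hνξ : ν ≪ ξ) :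
    llr μ ξ =ᵐ[μ] fun x ↦ llr μ ν x + llr ν ξ x := by
  have h := Measure.rnDeriv_mul_rnDeriv (κ := ξ) hμν
  filter_upwards [(hμν.trans hνξ).ae_le h, Measure.rnDeriv_pos hμν,
    hμν.ae_le (Measure.rnDeriv_lt_top μ ν), hμν.ae_le (Measure.rnDeriv_pos hνξ),
    (hμν.trans hνξ).ae_le (Measure.rnDeriv_lt_top ν ξ)] with x h1 h2 h3 h4 h5
  rw [llr, llr, llr, ← h1, Pi.mul_apply, ENNReal.toReal_mul,
    Real.log_mul (ENNReal.toReal_ne_zero.mpr ⟨h2.ne', h3.ne⟩)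
      (ENNReal.toReal_ne_zero.mpr ⟨h4.ne', h5.ne⟩)]

end Aux

theorem klDiv_compProd_true_kernel_lt {α β : Type*}
    [MeasurableSpace α] [StandardBorelSpace α] [MeasurableSpace β] [StandardBorelSpace β]
    (ρ σ : Measure α) [IsProbabilityMeasure ρ] [IsProbabilityMeasure σ]
    (η κ : Kernel α β) [IsMarkovKernel η] [IsMarkovKernel κ]
    (h_fin : klDiv (ρ ⊗ₘ κ) (σ ⊗ₘ η) < ∞)
    (h_ne : ¬ ∀ᵐ x ∂ρ, κ x = η x) :
    klDiv (ρ ⊗ₘ η) (σ ⊗ₘ η) < klDiv (ρ ⊗ₘ κ) (σ ⊗ₘ η) := by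
  -- extract absolute continuity and integrability from finiteness
  obtain ⟨hAC, h_int⟩ : (ρ ⊗ₘ κ ≪ σ ⊗ₘ η) ∧ Integrable (llr (ρ ⊗ₘ κ) (σ ⊗ₘ η)) (ρ ⊗ₘ κ) := by
    by_contra h
    rw [klDiv, if_neg h] at h_fin
    exact lt_irrefl _ h_fin
  have hρσ : ρ ≪ σ := Measure.absolutelyContinuous_of_compProd hAC
  have h1ξ : ρ ⊗ₘ η ≪ σ ⊗ₘ η := Measure.AbsolutelyContinuous.compProd_left hρσ η
  have h21 : ρ ⊗ₘ κ ≪ ρ ⊗ₘ η := klAux_absCont ρ σ η κ hρσ hAC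
  -- the llr of (ρ ⊗ₘ η) w.r.t. (σ ⊗ₘ η) is a function of the first coordinate
  have hB : llr (ρ ⊗ₘ η) (σ ⊗ₘ η) =ᵐ[σ ⊗ₘ η] fun p ↦ llr ρ σ p.1 := by
    filter_upwards [klAux_rnDeriv_compProd_left ρ σ η hρσ] with p hp
    rw [llr, hp]
    rfl
  have hBμ₁ : llr (ρ ⊗ₘ η) (σ ⊗ₘ η) =ᵐ[ρ ⊗ₘ η] fun p ↦ llr ρ σ p.1 := h1ξ.ae_le hB
  have hBμ₂ : llr (ρ ⊗ₘ η) (σ ⊗ₘ η) =ᵐ[ρ ⊗ₘ κ] fun p ↦ llr ρ σ p.1 := h21.ae_le hBμ₁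
  -- chain rule
  have hchain : llr (ρ ⊗ₘ κ) (σ ⊗ₘ η) =ᵐ[ρ ⊗ₘ κ]
      fun p ↦ llr (ρ ⊗ₘ κ) (ρ ⊗ₘ η) p + llr (ρ ⊗ₘ η) (σ ⊗ₘ η) p :=
    klAux_llr_chain _ _ _ h21 h1ξ
  have hsum : llr (ρ ⊗ₘ κ) (σ ⊗ₘ η) =ᵐ[ρ ⊗ₘ κ]
      fun p ↦ llr (ρ ⊗ₘ κ) (ρ ⊗ₘ η) p + llr ρ σ p.1 := by
    filter_upwards [hchain, hBμ₂] with p h1 h2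
    rw [h1, h2]
  -- fst of the composition-products
  have hfstκ : Measure.map Prod.fst (ρ ⊗ₘ κ) = ρ := Measure.fst_compProd ρ κ
  have hfstη : Measure.map Prod.fst (ρ ⊗ₘ η) = ρ := Measure.fst_compProd ρ η
  have hBsm : AEStronglyMeasurable (llr ρ σ) (Measure.map Prod.fst (ρ ⊗ₘ κ)) := by
    rw [hfstκ]; exact (measurable_llr ρ σ).aestronglyMeasurable
  have hBsm' : AEStronglyMeasurable (llr ρ σ) (Measure.map Prod.fst (ρ ⊗ₘ η)) := by
    rw [hfstη]; exact (measurable_llr ρ σ).aestronglyMeasurable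
  -- integrability of the two pieces
  have h_add_int : Integrable
      (fun p ↦ llr (ρ ⊗ₘ κ) (ρ ⊗ₘ η) p + llr ρ σ p.1) (ρ ⊗ₘ κ) := h_int.congr hsum
  have hNA : Integrable (fun p ↦ max (-(llr (ρ ⊗ₘ κ) (ρ ⊗ₘ η) p)) 0) (ρ ⊗ₘ κ) :=
    klAux_integrable_neg_llr _ _ h21
  have hNBρ : Integrable (fun x ↦ max (-(llr ρ σ x)) 0) ρ :=
    klAux_integrable_neg_llr _ _ hρσ
  have hmeasB : Measurable (fun p : α × β ↦ llr ρ σ p.1) :=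
    (measurable_llr ρ σ).comp measurable_fst
  have hNB : Integrable (fun p : α × β ↦ max (-(llr ρ σ p.1)) 0) (ρ ⊗ₘ κ) := by
    have hsm : AEStronglyMeasurable (fun x ↦ max (-(llr ρ σ x)) 0)
        (Measure.map Prod.fst (ρ ⊗ₘ κ)) := by
      rw [hfstκ]
      exact ((measurable_llr ρ σ).neg.max measurable_const).aestronglyMeasurable
    exact (integrable_map_measure hsm measurable_fst.aemeasurable).mp (by rwa [hfstκ])
  obtain ⟨hA_int, hB_int⟩ := klAux_integrable_of_add
    (measurable_llr _ _).aestronglyMeasurable hmeasB.aestronglyMeasurable h_add_int hNA hNB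
  have hBρ_int : Integrable (llr ρ σ) ρ := by
    have h' : Integrable (llr ρ σ ∘ Prod.fst) (ρ ⊗ₘ κ) := hB_int
    have h'' := (integrable_map_measure hBsm measurable_fst.aemeasurable).mpr h'
    rwa [hfstκ] at h''
  -- integrals
  have hint_eq : ∫ p, llr ρ σ p.1 ∂(ρ ⊗ₘ κ) = ∫ x, llr ρ σ x ∂ρ := by
    have h2 := integral_map (φ := Prod.fst) measurable_fst.aemeasurable hBsm
    rw [hfstκ] at h2
    exact h2.symm
  have h_eq₂ : ∫ p, llr (ρ ⊗ₘ κ) (σ ⊗ₘ η) p ∂(ρ ⊗ₘ κ)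
      = ∫ p, llr (ρ ⊗ₘ κ) (ρ ⊗ₘ η) p ∂(ρ ⊗ₘ κ) + ∫ x, llr ρ σ x ∂ρ := by
    rw [integral_congr_ae hsum, integral_add hA_int hB_int, hint_eq]
  -- the ρ ⊗ₘ η side
  have hB1_int : Integrable (llr (ρ ⊗ₘ η) (σ ⊗ₘ η)) (ρ ⊗ₘ η) := by
    refine Integrable.congr ?_ hBμ₁.symm
    have h' : Integrable (llr ρ σ) (Measure.map Prod.fst (ρ ⊗ₘ η)) := by rwa [hfstη]
    exact (integrable_map_measure hBsm' measurable_fst.aemeasurable).mp h'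
  have h_eq₁ : ∫ p, llr (ρ ⊗ₘ η) (σ ⊗ₘ η) p ∂(ρ ⊗ₘ η) = ∫ x, llr ρ σ x ∂ρ := by
    have h2 := integral_map (φ := Prod.fst) measurable_fst.aemeasurable hBsm'
    rw [hfstη] at h2
    rw [integral_congr_ae hBμ₁]
    exact h2.symm
  -- μ₂ ≠ μ₁
  have hne₂ : ρ ⊗ₘ κ ≠ ρ ⊗ₘ η := by
    intro h
    apply h_ne
    have hα : Nonempty α := by
      by_contra hα
      rw [not_nonempty_iff] at hα
      have : ρ Set.univ = 0 := by
        rw [Set.univ_eq_empty_iff.mpr hα]; simp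
      simp [measure_univ] at this
    have hβ : Nonempty β := by
      by_contra hβ
      rw [not_nonempty_iff] at hβ
      obtain ⟨a⟩ := hα
      have : (κ a) Set.univ = 0 := by
        rw [Set.univ_eq_empty_iff.mpr hβ]; simp
      simp [measure_univ] at this
    have hfst : (ρ ⊗ₘ η).fst = ρ := Measure.fst_compProd ρ η
    have h1 : ∀ᵐ x ∂ρ, κ x = (ρ ⊗ₘ η).condKernel x := by
      have := ProbabilityTheory.eq_condKernel_of_measure_eq_compProd
        (ρ := ρ ⊗ₘ η) κ (by rw [hfst, ← h])
      rwa [hfst] at this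
    have h2 : ∀ᵐ x ∂ρ, η x = (ρ ⊗ₘ η).condKernel x := by
      have := ProbabilityTheory.eq_condKernel_of_measure_eq_compProd
        (ρ := ρ ⊗ₘ η) η (by rw [hfst])
      rwa [hfst] at this
    filter_upwards [h1, h2] with x hx1 hx2
    rw [hx1, hx2]
  -- strict positivity of the extra term
  have hA_pos : 0 < ∫ p, llr (ρ ⊗ₘ κ) (ρ ⊗ₘ η) p ∂(ρ ⊗ₘ κ) :=
    klAux_integral_llr_pos _ _ h21 hA_int hne₂
  have hB_nonneg : 0 ≤ ∫ x, llr ρ σ x ∂ρ :=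
    klAux_integral_llr_nonneg _ _ hρσ hBρ_int
  -- conclude
  rw [klDiv, if_pos ⟨h1ξ, hB1_int⟩, klDiv, if_pos ⟨hAC, h_int⟩, h_eq₁, h_eq₂]
  rw [ENNReal.ofReal_lt_ofReal_iff (by linarith)]
  linarith
end

section
/- Let I be a finite index set and w : I → ℝ≥0 a family of nonnegative weights. For each i ∈ I let α_i and β_i be standard Borel measurable spaces, ρ_i and σ_i probability measures on α_i, η_i a Markov kernel from α_i to β_i (the true conditional distribution), and κ_i a Markov kernel from α_i to β_i (an imputation's conditional distribution). Then ∑_{i ∈ I} w_i · klDiv(ρ_i ⊗ₘ η_i, σ_i ⊗ₘ η_i) ≤ ∑_{i ∈ I} w_i · klDiv(ρ_i ⊗ₘ κ_i, σ_i ⊗ₘ η_i), as an inequality of extended nonnegative reals. Equivalently, the density ratio I-Score S*(H, P) = −E_{A,M_A}[klDiv(imputation distribution on projection A and pattern M_A, distribution of fully observed cases on A)] satisfies S*(H, P) ≤ S*(P*, P) for every compatible imputation distribution H, i.e., it is a proper imputation score. (Proposition 4.1.) -/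
open MeasureTheory ProbabilityTheory Real
open scoped ENNReal NNReal ProbabilityTheory Classical

section Aux

variable {𝓧 𝓨 : Type*} [MeasurableSpace 𝓧] [MeasurableSpace 𝓨]

lemma aux_compProd_withDensity (σ : Measure 𝓧) [SFinite σ] (η : Kernel 𝓧 𝓨)
    [IsSFiniteKernel η] {g : 𝓧 → ℝ≥0∞} (hg : Measurable g) :
    (σ.withDensity g) ⊗ₘ η = (σ ⊗ₘ η).withDensity (fun p => g p.1) := by
  ext s hs
  rw [Measure.compProd_apply hs, withDensity_apply _ hs,
    lintegral_withDensity_eq_lintegral_mul σ hg (Kernel.measurable_kernel_prodMk_left hs),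
    ← lintegral_indicator hs, Measure.lintegral_compProd
      (show Measurable (s.indicator fun p : 𝓧 × 𝓨 => g p.1) from
        Measurable.indicator (hg.comp measurable_fst) hs)]
  refine lintegral_congr fun x => ?_
  have h1 : ∀ y, s.indicator (fun p => g p.1) (x, y)
      = g x * (Prod.mk x ⁻¹' s).indicator (1 : 𝓨 → ℝ≥0∞) y := by
    intro y
    by_cases hy : (x, y) ∈ s
    · simp [Set.indicator_of_mem hy, Set.indicator_of_mem (show y ∈ Prod.mk x ⁻¹' s from hy)]
    · simp [Set.indicator_of_notMem hy,
        Set.indicator_of_notMem (show y ∉ Prod.mk x ⁻¹' s from hy)]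
  simp_rw [h1]
  rw [lintegral_const_mul _ (measurable_one.indicator (measurable_prodMk_left hs)),
    lintegral_indicator_one (measurable_prodMk_left hs)]
  rfl

/-- KL divergence between composition products with the *same* kernel equals (here: is at most)
the KL divergence of the first marginals. -/
lemma aux_klDiv_compProd_left_le (ρ σ : Measure 𝓧) [IsProbabilityMeasure ρ]
    [IsProbabilityMeasure σ] (η : Kernel 𝓧 𝓨) [IsMarkovKernel η] :
    klDiv (ρ ⊗ₘ η) (σ ⊗ₘ η) ≤ klDiv ρ σ := by
  by_cases h : ρ ≪ σ ∧ Integrable (llr ρ σ) ρ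
  swap
  · have : klDiv ρ σ = ⊤ := by unfold klDiv; rw [if_neg h]
    rw [this]; exact le_top
  obtain ⟨hac, hint⟩ := h
  have hg : Measurable (ρ.rnDeriv σ) := Measure.measurable_rnDeriv ρ σ
  have hwd : ρ ⊗ₘ η = (σ ⊗ₘ η).withDensity (fun p => ρ.rnDeriv σ p.1) := by
    conv_lhs => rw [← Measure.withDensity_rnDeriv_eq ρ σ hac]
    exact aux_compProd_withDensity σ η hg
  have hacP : ρ ⊗ₘ η ≪ σ ⊗ₘ η := hac.compProd_left η
  have hrn : (fun p => ρ.rnDeriv σ p.1) =ᵐ[σ ⊗ₘ η] (ρ ⊗ₘ η).rnDeriv (σ ⊗ₘ η) := by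
    conv_rhs => rw [hwd]
    exact (Measure.rnDeriv_withDensity _ (hg.comp measurable_fst)).symm
  have hrn' := hacP.ae_eq hrn
  have hllr : llr (ρ ⊗ₘ η) (σ ⊗ₘ η) =ᵐ[ρ ⊗ₘ η] fun p => llr ρ σ p.1 := by
    filter_upwards [hrn'] with p hp
    rw [llr, llr, ← hp]
  have hmap : (ρ ⊗ₘ η).map Prod.fst = ρ := Measure.fst_compProd ρ η
  have hint' : Integrable (fun p : 𝓧 × 𝓨 => llr ρ σ p.1) (ρ ⊗ₘ η) := by
    have : Integrable (llr ρ σ) ((ρ ⊗ₘ η).map Prod.fst) := by rw [hmap]; exact hint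
    exact (integrable_map_measure (stronglyMeasurable_llr ρ σ).aestronglyMeasurable
      measurable_fst.aemeasurable).mp this
  have hintP : Integrable (llr (ρ ⊗ₘ η) (σ ⊗ₘ η)) (ρ ⊗ₘ η) :=
    (integrable_congr hllr.symm).mp hint'
  have hI : ∫ p, llr (ρ ⊗ₘ η) (σ ⊗ₘ η) p ∂(ρ ⊗ₘ η) = ∫ x, llr ρ σ x ∂ρ := by
    have h2 := integral_map (μ := ρ ⊗ₘ η) (φ := Prod.fst) measurable_fst.aemeasurable
      (stronglyMeasurable_llr ρ σ).aestronglyMeasurable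
    rw [hmap] at h2
    rw [integral_congr_ae hllr, ← h2]
  unfold klDiv
  rw [if_pos ⟨hacP, hintP⟩, if_pos ⟨hac, hint⟩, hI]

/-- Data processing inequality for the first marginal. -/
lemma aux_klDiv_fst_le (μ ν : Measure (𝓧 × 𝓨)) [IsProbabilityMeasure μ]
    [IsProbabilityMeasure ν] :
    klDiv μ.fst ν.fst ≤ klDiv μ ν := by
  by_cases h : μ ≪ ν ∧ Integrable (llr μ ν) μ
  swap
  · have : klDiv μ ν = ⊤ := by unfold klDiv; rw [if_neg h]
    rw [this]; exact le_top
  obtain ⟨hμν, hint⟩ := h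
  have hmapμ : μ.map Prod.fst = μ.fst := rfl
  have hmapν : ν.map Prod.fst = ν.fst := rfl
  have hρσ : μ.fst ≪ ν.fst := hμν.map measurable_fst
  set ρ := μ.fst with hρ
  set σ := ν.fst with hσ
  have hgm : Measurable (ρ.rnDeriv σ) := Measure.measurable_rnDeriv ρ σ
  have hHm : Measurable (μ.rnDeriv ν) := Measure.measurable_rnDeriv μ ν
  set L : 𝓧 → ℝ := llr ρ σ with hL
  set G : 𝓧 × 𝓨 → ℝ := fun p => (ρ.rnDeriv σ p.1).toReal with hGdef
  set H : 𝓧 × 𝓨 → ℝ := fun p => (μ.rnDeriv ν p).toReal with hHdef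
  have hLm : Measurable L := measurable_llr ρ σ
  have hmS : Measurable fun p : 𝓧 × 𝓨 => L p.1 := hLm.comp measurable_fst
  have hmSneg : Measurable fun p : 𝓧 × 𝓨 => ENNReal.ofReal (max (-L p.1) 0) :=
    ((measurable_llr ρ σ).comp measurable_fst : Measurable fun p : 𝓧 × 𝓨 => L p.1).neg.max
      measurable_const |>.ennreal_ofReal
  have hGm : Measurable G := (hgm.comp measurable_fst).ennreal_toReal
  -- Step A : a.e. ν, G p = 0 → rnDeriv μ ν p = 0
  have hT : MeasurableSet {x : 𝓧 | (ρ.rnDeriv σ x).toReal = 0} :=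
    hgm.ennreal_toReal (measurableSet_singleton 0)
  have hρT : ρ {x : 𝓧 | (ρ.rnDeriv σ x).toReal = 0} = 0 := by
    have hsub : {x : 𝓧 | (ρ.rnDeriv σ x).toReal = 0}
        ⊆ {x | ρ.rnDeriv σ x = 0} ∪ {x | ρ.rnDeriv σ x = ∞} := by
      intro x hx
      rcases ENNReal.toReal_eq_zero_iff _ |>.mp hx with h0 | h0
      · exact Or.inl h0
      · exact Or.inr h0
    refine measure_mono_null hsub (measure_union_null ?_ ?_)
    · have := Measure.setLIntegral_rnDeriv hρσ {x | ρ.rnDeriv σ x = 0}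
      rw [← this]
      calc ∫⁻ x in {x | ρ.rnDeriv σ x = 0}, ρ.rnDeriv σ x ∂σ
          = ∫⁻ _ in {x | ρ.rnDeriv σ x = 0}, 0 ∂σ := by
            refine setLIntegral_congr_fun (hgm (measurableSet_singleton 0)) ?_
            exact fun x hx => hx
        _ = 0 := lintegral_zero
    · refine hρσ ?_
      have h2 := ae_iff.mp (Measure.rnDeriv_ne_top ρ σ)
      simpa using h2
  have hG0 : ∀ᵐ p ∂ν, G p = 0 → μ.rnDeriv ν p = 0 := by
    have hμS : μ (Prod.fst ⁻¹' {x : 𝓧 | (ρ.rnDeriv σ x).toReal = 0}) = 0 := by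
      rw [← Measure.fst_apply hT]; exact hρT
    have hS : MeasurableSet (Prod.fst ⁻¹' {x : 𝓧 | (ρ.rnDeriv σ x).toReal = 0}
        : Set (𝓧 × 𝓨)) := measurable_fst hT
    have h0 : ∫⁻ p in Prod.fst ⁻¹' {x : 𝓧 | (ρ.rnDeriv σ x).toReal = 0},
        μ.rnDeriv ν p ∂ν = 0 := by
      rw [Measure.setLIntegral_rnDeriv hμν]; exact hμS
    have := (setLIntegral_eq_zero_iff hS hHm).mp h0
    filter_upwards [this] with p hp hGp
    exact hp hGp
  -- Step B : pointwise tangent-line inequality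
  have hpt : ∀ᵐ p ∂ν, H p - G p ≤ H p * llr μ ν p - H p * L p.1 := by
    filter_upwards [hG0, Measure.rnDeriv_lt_top μ ν] with p hp0 hplt
    have hllrp : llr μ ν p = log (H p) := rfl
    have hLp : L p.1 = log (G p) := rfl
    rw [hllrp, hLp]
    have hHnn : 0 ≤ H p := ENNReal.toReal_nonneg
    have hGnn : 0 ≤ G p := ENNReal.toReal_nonneg
    rcases eq_or_lt_of_le hGnn with hG0' | hGpos
    · have : H p = 0 := by
        rw [hHdef]
        simp [hp0 hG0'.symm]
      rw [this, ← hG0']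
      simp
    rcases eq_or_lt_of_le hHnn with hH0 | hHpos
    · rw [← hH0]
      have h0 : (0:ℝ) * log (0:ℝ) - 0 * log (G p) = 0 := by ring
      rw [h0]
      linarith
    have hkey : log (G p / H p) ≤ G p / H p - 1 :=
      Real.log_le_sub_one_of_pos (div_pos hGpos hHpos)
    have hlog : log (G p) - log (H p) = log (G p / H p) :=
      (Real.log_div hGpos.ne' hHpos.ne').symm
    have : H p * log (H p) - H p * log (G p) = H p * (-(log (G p) - log (H p))) := by ring
    rw [this, hlog]
    have h1 : -(log (G p / H p)) ≥ 1 - G p / H p := by linarith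
    calc H p - G p = H p * (1 - G p / H p) := by field_simp
      _ ≤ H p * (-(log (G p / H p))) := by
          exact mul_le_mul_of_nonneg_left h1 hHnn
  -- Step C : basic integrabilities
  have i1 : Integrable H ν := Measure.integrable_toReal_rnDeriv
  have i2 : Integrable G ν := by
    have h2 : Integrable (fun x => (ρ.rnDeriv σ x).toReal) (ν.map Prod.fst) := by
      rw [hmapν]; exact Measure.integrable_toReal_rnDeriv
    exact (integrable_map_measure (hgm.ennreal_toReal).aestronglyMeasurable
      measurable_fst.aemeasurable).mp h2
  have i3 : Integrable (fun p => H p • llr μ ν p) ν :=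
    (integrable_rnDeriv_smul_iff hμν).mpr hint
  -- Step D : integrability of L with respect to ρ
  have hneg : ∫⁻ x, ENNReal.ofReal (max (-L x) 0) ∂ρ ≤ 1 := by
    have hmeas : AEMeasurable (fun x => ENNReal.ofReal (max (-L x) 0)) σ :=
      ((hLm.neg.max measurable_const).ennreal_ofReal).aemeasurable
    rw [← lintegral_rnDeriv_mul hρσ hmeas]
    have hbound : ∀ᵐ x ∂σ, ρ.rnDeriv σ x * ENNReal.ofReal (max (-L x) 0) ≤ 1 := by
      filter_upwards [Measure.rnDeriv_lt_top ρ σ] with x hx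
      set t := (ρ.rnDeriv σ x).toReal with ht
      have htnn : 0 ≤ t := ENNReal.toReal_nonneg
      have hrn : ρ.rnDeriv σ x = ENNReal.ofReal t := (ENNReal.ofReal_toReal hx.ne).symm
      rw [hrn, ← ENNReal.ofReal_mul htnn]
      have hLx : L x = log t := rfl
      have : t * max (-L x) 0 ≤ 1 := by
        rw [hLx]
        rcases le_or_gt 0 (log t) with hlt | hlt
        · rw [max_eq_right (by linarith)]; simp
        rcases eq_or_lt_of_le htnn with ht0 | htpos
        · rw [← ht0]; simp
        have ht1 : t ≤ 1 := by
          by_contra hc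
          push_neg at hc
          exact absurd (Real.log_pos hc) (not_lt.mpr hlt.le)
        have habs := (Real.abs_log_mul_self_lt t htpos ht1).le
        rw [max_eq_left (by linarith)]
        calc t * -log t = -(log t * t) := by ring
          _ = |log t * t| := (abs_of_nonpos (by nlinarith)).symm
          _ ≤ 1 := habs
      calc ENNReal.ofReal (t * max (-L x) 0) ≤ ENNReal.ofReal 1 :=
            ENNReal.ofReal_le_ofReal this
        _ = 1 := ENNReal.ofReal_one
    calc ∫⁻ x, ρ.rnDeriv σ x * ENNReal.ofReal (max (-L x) 0) ∂σ
        ≤ ∫⁻ _, 1 ∂σ := lintegral_mono_ae hbound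
      _ = 1 := by simp
  have hnegμ : ∫⁻ p, ENNReal.ofReal (max (-L p.1) 0) ∂μ ≤ 1 := by
    have h2 := lintegral_map (μ := μ)
      (f := fun x => ENNReal.ofReal (max (-L x) 0)) (g := Prod.fst)
      ((hLm.neg.max measurable_const).ennreal_ofReal) measurable_fst
    rw [hmapμ] at h2
    rw [← h2]; exact hneg
  have hILρ : Integrable L ρ := by
    have hLposμ : ∫⁻ p, ENNReal.ofReal (max (L p.1) 0) ∂μ < ∞ := by
      have hmeas : AEMeasurable (fun p : 𝓧 × 𝓨 => ENNReal.ofReal (max (L p.1) 0)) ν :=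
        ((hmS.max measurable_const).ennreal_ofReal).aemeasurable
      rw [← lintegral_rnDeriv_mul hμν hmeas]
      have hbound : ∀ᵐ p ∂ν, μ.rnDeriv ν p * ENNReal.ofReal (max (L p.1) 0)
          ≤ ENNReal.ofReal (max (H p * llr μ ν p) 0) + ENNReal.ofReal (G p)
            + μ.rnDeriv ν p * ENNReal.ofReal (max (-L p.1) 0) := by
        filter_upwards [hpt, Measure.rnDeriv_lt_top μ ν] with p hp hplt
        have hHp : μ.rnDeriv ν p = ENNReal.ofReal (H p) :=
          (ENNReal.ofReal_toReal hplt.ne).symm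
        have hHnn : 0 ≤ H p := ENNReal.toReal_nonneg
        rw [hHp, ← ENNReal.ofReal_mul hHnn, ← ENNReal.ofReal_mul hHnn]
        have hreal : H p * max (L p.1) 0
            ≤ max (H p * llr μ ν p) 0 + G p + H p * max (-L p.1) 0 := by
          have e1 : max (L p.1) 0 = L p.1 + max (-L p.1) 0 := by
            rcases le_or_gt (L p.1) 0 with h' | h'
            · rw [max_eq_right h', max_eq_left (by linarith)]; ring
            · rw [max_eq_left h'.le, max_eq_right (by linarith)]; ring
          have e2 : H p * L p.1 ≤ max (H p * llr μ ν p) 0 + G p - H p := by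
            have := le_max_left (H p * llr μ ν p) 0
            linarith [hp]
          have e3 : H p * max (L p.1) 0 = H p * L p.1 + H p * max (-L p.1) 0 := by
            rw [e1]; ring
          have hHge : 0 ≤ H p := hHnn
          linarith
        calc ENNReal.ofReal (H p * max (L p.1) 0)
            ≤ ENNReal.ofReal (max (H p * llr μ ν p) 0 + G p + H p * max (-L p.1) 0) :=
              ENNReal.ofReal_le_ofReal hreal
          _ ≤ ENNReal.ofReal (max (H p * llr μ ν p) 0) + ENNReal.ofReal (G p)
              + ENNReal.ofReal (H p * max (-L p.1) 0) := by
              refine le_trans (ENNReal.ofReal_add_le) ?_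
              exact add_le_add_left ENNReal.ofReal_add_le _
      have hfin1 : ∫⁻ p, ENNReal.ofReal (max (H p * llr μ ν p) 0) ∂ν < ∞ := by
        refine lt_of_le_of_lt (lintegral_mono fun p => ?_) i3.2
        simp only [smul_eq_mul]
        calc ENNReal.ofReal (max (H p * llr μ ν p) 0)
            ≤ ENNReal.ofReal (|H p * llr μ ν p|) :=
              ENNReal.ofReal_le_ofReal (max_le (le_abs_self _) (abs_nonneg _))
          _ = ‖H p * llr μ ν p‖₊ := by
              rw [← Real.norm_eq_abs, ofReal_norm, enorm_eq_nnnorm]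
      have hfin2 : ∫⁻ p, ENNReal.ofReal (G p) ∂ν < ∞ := by
        refine lt_of_le_of_lt (lintegral_mono fun p => ?_) i2.2
        calc ENNReal.ofReal (G p) ≤ ENNReal.ofReal (|G p|) :=
              ENNReal.ofReal_le_ofReal (le_abs_self _)
          _ = ‖G p‖₊ := by rw [← Real.norm_eq_abs, ofReal_norm, enorm_eq_nnnorm]
      have hfin3 : ∫⁻ p, μ.rnDeriv ν p * ENNReal.ofReal (max (-L p.1) 0) ∂ν < ∞ := by
        rw [lintegral_rnDeriv_mul hμν hmSneg.aemeasurable]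
        exact lt_of_le_of_lt hnegμ (by norm_num)
      calc ∫⁻ p, μ.rnDeriv ν p * ENNReal.ofReal (max (L p.1) 0) ∂ν
          ≤ ∫⁻ p, (ENNReal.ofReal (max (H p * llr μ ν p) 0) + ENNReal.ofReal (G p)
              + μ.rnDeriv ν p * ENNReal.ofReal (max (-L p.1) 0)) ∂ν :=
            lintegral_mono_ae hbound
        _ = (∫⁻ p, (ENNReal.ofReal (max (H p * llr μ ν p) 0) + ENNReal.ofReal (G p)) ∂ν)
              + ∫⁻ p, μ.rnDeriv ν p * ENNReal.ofReal (max (-L p.1) 0) ∂ν := by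
            rw [lintegral_add_right]
            exact hHm.mul hmSneg
        _ = (∫⁻ p, ENNReal.ofReal (max (H p * llr μ ν p) 0) ∂ν)
              + (∫⁻ p, ENNReal.ofReal (G p) ∂ν)
              + ∫⁻ p, μ.rnDeriv ν p * ENNReal.ofReal (max (-L p.1) 0) ∂ν := by
            rw [lintegral_add_right _ (hGm.ennreal_ofReal)]
        _ < ∞ := by
            exact ENNReal.add_lt_top.mpr ⟨ENNReal.add_lt_top.mpr ⟨hfin1, hfin2⟩, hfin3⟩
    have hLpos : ∫⁻ x, ENNReal.ofReal (max (L x) 0) ∂ρ < ∞ := by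
      have h2 := lintegral_map (μ := μ)
        (f := fun x => ENNReal.ofReal (max (L x) 0)) (g := Prod.fst)
        ((hLm.max measurable_const).ennreal_ofReal) measurable_fst
      rw [hmapμ] at h2
      rw [h2]; exact hLposμ
    have hIpos : Integrable (fun x => max (L x) 0) ρ := by
      refine ⟨(hLm.max measurable_const).aestronglyMeasurable, ?_⟩
      have hge : (0 : 𝓧 → ℝ) ≤ᵐ[ρ] fun x => max (L x) 0 :=
        Filter.Eventually.of_forall fun x => le_max_right _ _
      rw [hasFiniteIntegral_iff_ofReal hge]
      exact hLpos
    have hIneg : Integrable (fun x => max (-L x) 0) ρ := by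
      refine ⟨(hLm.neg.max measurable_const).aestronglyMeasurable, ?_⟩
      have hge : (0 : 𝓧 → ℝ) ≤ᵐ[ρ] fun x => max (-L x) 0 :=
        Filter.Eventually.of_forall fun x => le_max_right _ _
      rw [hasFiniteIntegral_iff_ofReal hge]
      exact lt_of_le_of_lt hneg (by norm_num)
    have : L = fun x => max (L x) 0 - max (-L x) 0 := by
      funext x; rw [max_zero_sub_max_neg_zero_eq_self]
    rw [this]
    exact hIpos.sub hIneg
  -- Step E : conclude
  have hintLμ : Integrable (fun p : 𝓧 × 𝓨 => L p.1) μ := by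
    have h2 : Integrable L (μ.map Prod.fst) := by rw [hmapμ]; exact hILρ
    exact (integrable_map_measure hLm.aestronglyMeasurable
      measurable_fst.aemeasurable).mp h2
  have i5 : Integrable (fun p => H p • L p.1) ν :=
    (integrable_rnDeriv_smul_iff hμν).mpr hintLμ
  have hIL : ∫ x, L x ∂ρ = ∫ p, H p • L p.1 ∂ν := by
    rw [integral_rnDeriv_smul hμν]
    have h2 := integral_map (μ := μ) (φ := Prod.fst) measurable_fst.aemeasurable
      hLm.aestronglyMeasurable (f := L)
    rw [hmapμ] at h2
    exact h2
  have hIllr : ∫ p, llr μ ν p ∂μ = ∫ p, H p • llr μ ν p ∂ν :=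
    (integral_rnDeriv_smul hμν).symm
  have hintHG : ∫ p, (H p - G p) ∂ν = 0 := by
    rw [integral_sub i1 i2]
    have e1 : ∫ p, H p ∂ν = (μ Set.univ).toReal := Measure.integral_toReal_rnDeriv hμν
    have e2 : ∫ p, G p ∂ν = (ρ Set.univ).toReal := by
      have h2 := integral_map (μ := ν) (φ := Prod.fst) measurable_fst.aemeasurable
        (hgm.ennreal_toReal).aestronglyMeasurable (f := fun x => (ρ.rnDeriv σ x).toReal)
      rw [hmapν] at h2
      rw [← h2]
      exact Measure.integral_toReal_rnDeriv hρσ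
    rw [e1, e2]
    simp
  have hfinal : ∫ x, L x ∂ρ ≤ ∫ p, llr μ ν p ∂μ := by
    rw [hIL, hIllr]
    have hmono : ∫ p, (H p - G p) ∂ν ≤ ∫ p, (H p • llr μ ν p - H p • L p.1) ∂ν := by
      refine integral_mono_ae (i1.sub i2) (i3.sub i5) ?_
      filter_upwards [hpt] with p hp
      simpa using hp
    rw [hintHG, integral_sub i3 i5] at hmono
    linarith
  unfold klDiv
  rw [if_pos ⟨hρσ, hILρ⟩, if_pos ⟨hμν, hint⟩]
  exact ENNReal.ofReal_le_ofReal hfinal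

end Aux

theorem weighted_sum_klDiv_le {I : Type*} [Fintype I] (w : I → ℝ≥0)
    (α β : I → Type*)
    [∀ i, MeasurableSpace (α i)] [∀ i, StandardBorelSpace (α i)]
    [∀ i, MeasurableSpace (β i)] [∀ i, StandardBorelSpace (β i)]
    (ρ σ : ∀ i, Measure (α i))
    [∀ i, IsProbabilityMeasure (ρ i)] [∀ i, IsProbabilityMeasure (σ i)]
    (η κ : ∀ i, Kernel (α i) (β i))
    [∀ i, IsMarkovKernel (η i)] [∀ i, IsMarkovKernel (κ i)] :
    ∑ i, (w i : ℝ≥0∞) * klDiv (ρ i ⊗ₘ η i) (σ i ⊗ₘ η i) ≤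
      ∑ i, (w i : ℝ≥0∞) * klDiv (ρ i ⊗ₘ κ i) (σ i ⊗ₘ η i) := by
  refine Finset.sum_le_sum fun i _ => mul_le_mul_right ?_ _
  calc klDiv (ρ i ⊗ₘ η i) (σ i ⊗ₘ η i)
      ≤ klDiv (ρ i) (σ i) := aux_klDiv_compProd_left_le _ _ _
    _ = klDiv (ρ i ⊗ₘ κ i).fst (σ i ⊗ₘ η i).fst := by
        rw [Measure.fst_compProd, Measure.fst_compProd]
    _ ≤ klDiv (ρ i ⊗ₘ κ i) (σ i ⊗ₘ η i) := aux_klDiv_fst_le _ _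
end
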